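/- Any two connected anti-regular graphs with the same number n ≥ 2 of vertices are isomorphic; that is, up to isomorphism there is at most one connected anti-regular graph on n vertices. -/

import Mathlib

open SimpleGraph

/-- A graph on at least two vertices is anti-regular if exactly one unordered pair
of distinct vertices has equal degrees. -/
def SimpleGraph.IsAntiRegular {V : Type*} [Fintype V] (G : SimpleGraph V) : Prop :=
  letI := Classical.decEq V
  letI : DecidableRel G.Adj := Classical.decRel _
  2 ≤ Fintype.card V ∧ ∃ u v : V, u ≠ v ∧ G.degree u = G.degree v ∧
    ∀ a b : V, a ≠ b → G.degree a = G.degree b → ({a, b} : Set V) = {u, v}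

private def canonG (n : ℕ) : SimpleGraph (Fin n) where
  Adj i j := i ≠ j ∧ n ≤ i.val + j.val + 1
  symm := ⟨by rintro i j ⟨h1, h2⟩; exact ⟨h1.symm, by omega⟩⟩
  loopless := ⟨by rintro i ⟨h1, _⟩; exact h1 rfl⟩

@[simp] private lemma canonG_adj (n : ℕ) (i j : Fin n) :
    (canonG n).Adj i j ↔ i ≠ j ∧ n ≤ i.val + j.val + 1 := Iff.rfl

private def compSub {V : Type*} (G : SimpleGraph V) (v : V) :
    SimpleGraph {x : V // x ≠ v} where
  Adj a b := a ≠ b ∧ ¬ G.Adj ↑a ↑b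
  symm := ⟨by rintro a b ⟨h1, h2⟩; exact ⟨h1.symm, fun h => h2 h.symm⟩⟩
  loopless := ⟨by rintro a ⟨h1, _⟩; exact h1 rfl⟩

@[simp] private lemma compSub_adj {V : Type*} (G : SimpleGraph V) (v : V)
    (a b : {x : V // x ≠ v}) :
    (compSub G v).Adj a b ↔ a ≠ b ∧ ¬ G.Adj ↑a ↑b := Iff.rfl

section helpers

variable {V : Type*} [Fintype V] (G : SimpleGraph V)

private lemma isAntiRegular_iff' [DecidableRel G.Adj] :
    G.IsAntiRegular ↔ (2 ≤ Fintype.card V ∧ ∃ u v : V, u ≠ v ∧ G.degree u = G.degree v ∧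
      ∀ a b : V, a ≠ b → G.degree a = G.degree b → ({a, b} : Set V) = {u, v}) := by
  unfold SimpleGraph.IsAntiRegular
  have h : (Classical.decRel G.Adj : DecidableRel G.Adj) = ‹DecidableRel G.Adj› := by
    funext a b; exact Subsingleton.elim _ _
  rw [h]

private lemma conn_deg_pos [DecidableRel G.Adj] (hc : G.Connected)
    (h2 : 2 ≤ Fintype.card V) (x : V) : 0 < G.degree x := by
  rw [G.degree_pos_iff_exists_adj x]
  obtain ⟨y, hy⟩ := Fintype.exists_ne_of_one_lt_card h2 x
  obtain ⟨w⟩ := hc x y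
  cases w with
  | nil => exact absurd rfl hy
  | cons h p => exact ⟨_, h⟩

private lemma dom_adj [DecidableRel G.Adj] {v : V}
    (hd : G.degree v = Fintype.card V - 1) {x : V} (hx : x ≠ v) : G.Adj v x := by
  classical
  have hsub : G.neighborFinset v ⊆ Finset.univ.erase v := by
    intro y hy
    rw [SimpleGraph.mem_neighborFinset] at hy
    exact Finset.mem_erase.mpr ⟨hy.ne', Finset.mem_univ y⟩
  have heq : G.neighborFinset v = Finset.univ.erase v := by
    apply Finset.eq_of_subset_of_card_le hsub
    rw [Finset.card_erase_of_mem (Finset.mem_univ v), Finset.card_univ,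
      SimpleGraph.card_neighborFinset_eq_degree, hd]
  have hmem : x ∈ G.neighborFinset v := by
    rw [heq]; exact Finset.mem_erase.mpr ⟨hx, Finset.mem_univ x⟩
  rwa [SimpleGraph.mem_neighborFinset] at hmem

private lemma dom_connected {v : V} (hv : ∀ x, x ≠ v → G.Adj v x) : G.Connected := by
  rw [SimpleGraph.connected_iff]
  refine ⟨fun x y => ?_, ⟨v⟩⟩
  have hx : G.Reachable v x := by
    by_cases h : x = v
    · subst h; exact SimpleGraph.Reachable.refl x
    · exact (hv x h).reachable
  have hy : G.Reachable v y := by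
    by_cases h : y = v
    · subst h; exact SimpleGraph.Reachable.refl y
    · exact (hv y h).reachable
  exact hx.symm.trans hy

end helpers

universe u

private theorem key : ∀ n : ℕ, 2 ≤ n → ∀ (V : Type u) (_ : Fintype V) (G : SimpleGraph V),
    Fintype.card V = n → G.Connected → G.IsAntiRegular → Nonempty (G ≃g canonG n) := by
  intro n hn
  induction n, hn using Nat.le_induction with
  | base =>
    intro V _ G hcard hc _
    classical
    obtain ⟨x, y, hxy⟩ := Fintype.one_lt_card_iff.mp (by omega : 1 < Fintype.card V)
    have huniv : ∀ z : V, z = x ∨ z = y := by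
      intro z
      by_contra hz
      push_neg at hz
      have h3 : ({z, x, y} : Finset V).card = 3 := by
        rw [Finset.card_insert_of_notMem (by simp [hz.1, hz.2]),
          Finset.card_insert_of_notMem (by simp [hxy]), Finset.card_singleton]
      have h4 := Finset.card_le_card (Finset.subset_univ ({z, x, y} : Finset V))
      rw [h3, Finset.card_univ, hcard] at h4
      omega
    have hadj : ∀ a b : V, a ≠ b → G.Adj a b := by
      intro a b hab
      obtain ⟨w⟩ := hc a b
      cases w with
      | nil => exact absurd rfl hab
      | cons h p =>
        rename_i c
        have hca : c ≠ a := h.ne'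
        rcases huniv c with rfl | rfl <;> rcases huniv a with rfl | rfl <;>
          rcases huniv b with rfl | rfl <;>
          first
            | exact h
            | exact absurd rfl hab
            | exact absurd rfl hca
    refine ⟨⟨Fintype.equivFinOfCardEq hcard, ?_⟩⟩
    intro a b
    set e := Fintype.equivFinOfCardEq hcard with he
    simp only [canonG_adj]
    constructor
    · rintro ⟨hne, -⟩
      exact hadj a b (fun h => hne (by rw [h]))
    · intro h
      have hne : a ≠ b := h.ne
      have hne' : e a ≠ e b := fun heq => hne (e.injective heq)
      refine ⟨hne', ?_⟩
      have h1 : (e a).val < 2 := (e a).isLt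
      have h2 : (e b).val < 2 := (e b).isLt
      have h3 : (e a).val ≠ (e b).val := fun hv => hne' (Fin.ext hv)
      omega
  | succ n hn IH =>
    intro V _ G hcard hc ha
    classical
    rw [isAntiRegular_iff'] at ha
    obtain ⟨h2, u₀, v₀, huv, hdeg, huniq⟩ := ha
    have hd_pos : ∀ x : V, 0 < G.degree x := conn_deg_pos G hc (by omega)
    have hd_lt : ∀ x : V, G.degree x < n + 1 := by
      intro x; have := G.degree_lt_card_verts x; omega
    have hinj : ∀ a b : V, a ≠ u₀ → b ≠ u₀ → G.degree a = G.degree b → a = b := by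
      intro a b ha' hb' h
      by_contra hne
      rcases Set.pair_eq_pair_iff.mp (huniq a b hne h) with ⟨h1, _⟩ | ⟨_, h1⟩
      · exact ha' h1
      · exact hb' h1
    have hsurj : ∀ k, 1 ≤ k → k ≤ n → ∃ x, x ≠ u₀ ∧ G.degree x = k := by
      intro k hk1 hk2
      have himg : (Finset.univ.erase u₀).image (fun x => G.degree x) = Finset.Icc 1 n := by
        apply Finset.eq_of_subset_of_card_le
        · intro m hm
          simp only [Finset.mem_image, Finset.mem_erase] at hm
          obtain ⟨x, _, rfl⟩ := hm
          rw [Finset.mem_Icc]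
          exact ⟨hd_pos x, by have := hd_lt x; omega⟩
        · have hinjOn : Set.InjOn (fun x => G.degree x) ↑(Finset.univ.erase u₀) := by
            intro a haa b hbb h
            exact hinj a b (by simpa using haa) (by simpa using hbb) h
          rw [Nat.card_Icc, Finset.card_image_of_injOn hinjOn,
            Finset.card_erase_of_mem (Finset.mem_univ u₀), Finset.card_univ, hcard]
      have hk : k ∈ (Finset.univ.erase u₀).image (fun x => G.degree x) := by
        rw [himg, Finset.mem_Icc]; exact ⟨hk1, hk2⟩
      simp only [Finset.mem_image, Finset.mem_erase] at hk
      obtain ⟨x, ⟨hx1, _⟩, hx2⟩ := hk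
      exact ⟨x, hx1, hx2⟩
    obtain ⟨v, hvne, hvdeg⟩ := hsurj n (by omega) le_rfl
    obtain ⟨p, hpne, hpdeg⟩ := hsurj 1 le_rfl (by omega)
    have hpv : p ≠ v := by intro h; rw [h, hvdeg] at hpdeg; omega
    have hu₀ : G.degree u₀ ≠ n := by
      intro h
      have h1 : G.Adj u₀ p := dom_adj G (by rw [hcard]; omega) hpne
      have h2' : G.Adj v p := dom_adj G (by rw [hcard]; omega) hpv
      have hsub : ({u₀, v} : Finset V) ⊆ G.neighborFinset p := by
        intro z hz
        rcases Finset.mem_insert.mp hz with rfl | hz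
        · exact (SimpleGraph.mem_neighborFinset _ _ _).mpr h1.symm
        · rw [Finset.mem_singleton] at hz; subst hz
          exact (SimpleGraph.mem_neighborFinset _ _ _).mpr h2'.symm
      have hle := Finset.card_le_card hsub
      rw [Finset.card_pair (fun h' => hvne h'.symm),
        SimpleGraph.card_neighborFinset_eq_degree, hpdeg] at hle
      omega
    have hu₀v : u₀ ≠ v := by
      intro h; rw [h, hvdeg] at hu₀; exact hu₀ rfl
    have hv₀v : v₀ ≠ v := by
      intro h
      apply hu₀
      rw [hdeg, h, hvdeg]
    have hvdom : ∀ x : V, x ≠ v → G.Adj v x :=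
      fun x hx => dom_adj G (by rw [hcard]; omega) hx
    have hcards : Fintype.card {x : V // x ≠ v} = n := by
      have hcc := Fintype.card_subtype_compl (fun x : V => x = v)
      rw [Fintype.card_subtype_eq, hcard] at hcc
      simpa using hcc
    have hG'deg : ∀ a : {x : V // x ≠ v}, (compSub G v).degree a = n - G.degree ↑a := by
      intro a
      have hnb : (compSub G v).neighborFinset a
          = (Finset.univ.erase a) \ (Finset.univ.filter fun b => G.Adj ↑a ↑b) := by
        ext b
        simp only [SimpleGraph.mem_neighborFinset, compSub_adj, Finset.mem_sdiff,
          Finset.mem_erase, Finset.mem_filter, Finset.mem_univ, true_and]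
        constructor
        · rintro ⟨h1', h2'⟩; exact ⟨⟨h1'.symm, trivial⟩, h2'⟩
        · rintro ⟨⟨h1', -⟩, h2'⟩; exact ⟨h1'.symm, h2'⟩
      have hfsub : (Finset.univ.filter fun b : {x : V // x ≠ v} => G.Adj ↑a ↑b)
          ⊆ Finset.univ.erase a := by
        intro b hb
        rw [Finset.mem_filter] at hb
        refine Finset.mem_erase.mpr ⟨?_, Finset.mem_univ b⟩
        intro hba
        subst hba
        exact G.irrefl hb.2
      have hvmem : v ∈ G.neighborFinset ↑a := by
        rw [SimpleGraph.mem_neighborFinset]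
        exact (hvdom ↑a a.2).symm
      have hcf : (Finset.univ.filter fun b : {x : V // x ≠ v} => G.Adj ↑a ↑b).card
          = G.degree ↑a - 1 := by
        have himg : (Finset.univ.filter fun b : {x : V // x ≠ v} => G.Adj ↑a ↑b).image
            Subtype.val = (G.neighborFinset ↑a).erase v := by
          ext z
          simp only [Finset.mem_image, Finset.mem_filter, Finset.mem_univ, true_and,
            Finset.mem_erase, SimpleGraph.mem_neighborFinset]
          constructor
          · rintro ⟨b, hb, rfl⟩; exact ⟨b.2, hb⟩
          · rintro ⟨h1', h2'⟩; exact ⟨⟨z, h1'⟩, h2', rfl⟩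
        have h1' := Finset.card_image_of_injective
          (Finset.univ.filter fun b : {x : V // x ≠ v} => G.Adj ↑a ↑b) Subtype.val_injective
        rw [himg] at h1'
        rw [← h1', Finset.card_erase_of_mem hvmem, SimpleGraph.card_neighborFinset_eq_degree]
      rw [← SimpleGraph.card_neighborFinset_eq_degree, hnb, Finset.card_sdiff_of_subset hfsub, hcf,
        Finset.card_erase_of_mem (Finset.mem_univ a), Finset.card_univ, hcards]
      have hle := hd_lt ↑a
      have hge := hd_pos ↑a
      omega
    have hpdom : ∀ b : {x : V // x ≠ v}, b ≠ ⟨p, hpv⟩ → (compSub G v).Adj ⟨p, hpv⟩ b := by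
      intro b hb
      refine dom_adj (compSub G v) ?_ hb
      rw [hG'deg, hcards]
      show n - G.degree p = n - 1
      rw [hpdeg]
    have hG'conn : (compSub G v).Connected := dom_connected _ hpdom
    have hG'anti : (compSub G v).IsAntiRegular := by
      rw [isAntiRegular_iff']
      refine ⟨by rw [hcards]; omega, ⟨u₀, hu₀v⟩, ⟨v₀, hv₀v⟩, ?_, ?_, ?_⟩
      · intro h; exact huv (congrArg Subtype.val h)
      · rw [hG'deg, hG'deg]
        show n - G.degree u₀ = n - G.degree v₀
        rw [hdeg]
      · intro a b hab hd'
        rw [hG'deg, hG'deg] at hd'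
        have hdeq : G.degree ↑a = G.degree ↑b := by
          have h1' := hd_lt ↑a
          have h2' := hd_lt ↑b
          omega
        have hvals := huniq ↑a ↑b (fun h => hab (Subtype.ext h)) hdeq
        rcases Set.pair_eq_pair_iff.mp hvals with ⟨hh1, hh2⟩ | ⟨hh1, hh2⟩
        · rw [show a = ⟨u₀, hu₀v⟩ from Subtype.ext hh1,
            show b = ⟨v₀, hv₀v⟩ from Subtype.ext hh2]
        · rw [show a = ⟨v₀, hv₀v⟩ from Subtype.ext hh1,
            show b = ⟨u₀, hu₀v⟩ from Subtype.ext hh2, Set.pair_comm]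
    obtain ⟨e⟩ := IH {x : V // x ≠ v} inferInstance (compSub G v) hcards hG'conn hG'anti
    -- build the isomorphism
    set f : V → Fin (n + 1) := fun x =>
      if h : x = v then ⟨n, by omega⟩ else ⟨n - 1 - (e ⟨x, h⟩).val, by
        have := (e ⟨x, h⟩).isLt; omega⟩ with hf
    have hfv : f v = ⟨n, by omega⟩ := dif_pos rfl
    have hfx : ∀ (x : V) (h : x ≠ v),
        f x = ⟨n - 1 - (e ⟨x, h⟩).val, by have := (e ⟨x, h⟩).isLt; omega⟩ :=
      fun x h => dif_neg h
    have hfinj : Function.Injective f := by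
      intro x y hxy
      by_cases hx : x = v <;> by_cases hy : y = v
      · rw [hx, hy]
      · subst hx
        rw [hfv, hfx y hy] at hxy
        simp only [Fin.mk.injEq] at hxy
        have := (e ⟨y, hy⟩).isLt
        omega
      · subst hy
        rw [hfv, hfx x hx] at hxy
        simp only [Fin.mk.injEq] at hxy
        have := (e ⟨x, hx⟩).isLt
        omega
      · rw [hfx x hx, hfx y hy] at hxy
        simp only [Fin.mk.injEq] at hxy
        have h1' := (e ⟨x, hx⟩).isLt
        have h2' := (e ⟨y, hy⟩).isLt
        have h3' : (e ⟨x, hx⟩ : Fin n) = e ⟨y, hy⟩ := Fin.ext (by omega)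
        have h4' : (⟨x, hx⟩ : {z : V // z ≠ v}) = ⟨y, hy⟩ := e.injective h3'
        exact congrArg Subtype.val h4'
    have hbij : Function.Bijective f :=
      (Fintype.bijective_iff_injective_and_card f).mpr ⟨hfinj, by simp [hcard]⟩
    refine ⟨⟨Equiv.ofBijective f hbij, ?_⟩⟩
    intro x y
    show (canonG (n + 1)).Adj (f x) (f y) ↔ G.Adj x y
    by_cases hx : x = v <;> by_cases hy : y = v
    · rw [hx, hy, hfv]
      simp only [canonG_adj]
      exact ⟨fun h => absurd rfl h.1, fun h => absurd h (G.loopless.irrefl v)⟩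
    · rw [hx, hfv, hfx y hy]
      simp only [canonG_adj, ne_eq, Fin.mk.injEq]
      have hk := (e ⟨y, hy⟩).isLt
      exact ⟨fun _ => hvdom y hy, fun _ => ⟨by omega, by omega⟩⟩
    · rw [hy, hfv, hfx x hx]
      simp only [canonG_adj, ne_eq, Fin.mk.injEq]
      have hk := (e ⟨x, hx⟩).isLt
      exact ⟨fun _ => (hvdom x hx).symm, fun _ => ⟨by omega, by omega⟩⟩
    · rw [hfx x hx, hfx y hy]
      simp only [canonG_adj, ne_eq, Fin.mk.injEq]
      have hkey := e.map_rel_iff (a := (⟨x, hx⟩ : {z : V // z ≠ v})) (b := ⟨y, hy⟩)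
      simp only [canonG_adj, compSub_adj] at hkey
      have hilt := (e ⟨x, hx⟩).isLt
      have hjlt := (e ⟨y, hy⟩).isLt
      by_cases hxy : x = y
      · subst hxy
        constructor
        · rintro ⟨h1', -⟩; exact absurd rfl h1'
        · intro h; exact absurd h (G.loopless.irrefl x)
      · have hab : (⟨x, hx⟩ : {z : V // z ≠ v}) ≠ ⟨y, hy⟩ :=
          fun h => hxy (congrArg Subtype.val h)
        have hij : ((e ⟨x, hx⟩) : ℕ) ≠ ((e ⟨y, hy⟩) : ℕ) := by
          intro h
          exact hab (e.injective (Fin.ext h))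
        have hAdjIff : ¬ G.Adj x y ↔ n ≤ ((e ⟨x, hx⟩) : ℕ) + ((e ⟨y, hy⟩) : ℕ) + 1 := by
          constructor
          · intro h
            exact (hkey.mpr ⟨hab, h⟩).2
          · intro h
            exact (hkey.mp ⟨fun hh => hij (congrArg Fin.val hh), h⟩).2
        constructor
        · rintro ⟨-, hsum⟩
          by_contra hno
          have := hAdjIff.mp hno
          omega
        · intro hadj
          have hsum : ¬ (n ≤ ((e ⟨x, hx⟩) : ℕ) + ((e ⟨y, hy⟩) : ℕ) + 1) :=
            fun h => (hAdjIff.mpr h) hadj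
          exact ⟨by omega, by omega⟩

theorem connected_antiRegular_unique {V W : Type*} [Fintype V] [Fintype W]
    (G : SimpleGraph V) (H : SimpleGraph W) (hcard : Fintype.card V = Fintype.card W)
    (hn : 2 ≤ Fintype.card V)
    (hGc : G.Connected) (hGa : G.IsAntiRegular)
    (hHc : H.Connected) (hHa : H.IsAntiRegular) :
    Nonempty (G ≃g H) := by
  obtain ⟨eG⟩ := key (Fintype.card V) hn V ‹_› G rfl hGc hGa
  obtain ⟨eH⟩ := key (Fintype.card V) hn W ‹_› H hcard.symm hHc hHa
  exact ⟨eG.trans eH.symm⟩
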